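/- With the setup of Lemma 1 (s^T y > 0, B0, H0 = B0^{-1} symmetric positive definite, φ ∈ [0,1], Δ0, Φ0, λ0, α̃, β̃, δ̃ as defined), the inverse of the 2×2 matrix [[α̃, β̃],[β̃, δ̃]] equals [[-φ λ0, -s^T y - φ λ0],[-s^T y - φ λ0, -s^T y - φ λ0 - y^T H0 y]], provided α̃ δ̃ - β̃² ≠ 0. -/

import Mathlib

open Matrix

theorem lemma1_aux (t b h φ : ℝ) (ht : 0 < t) (hb : 0 < b) (hh : 0 < h)
    (h0 : 0 ≤ φ) (h1 : φ ≤ 1) :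
    (!![1 / t + ((1 - φ) * t ^ 2 / ((1 - φ) * t ^ 2 + φ * h * b)) * h / t ^ 2,
        -((1 - φ) * t ^ 2 / ((1 - φ) * t ^ 2 + φ * h * b) / t);
        -((1 - φ) * t ^ 2 / ((1 - φ) * t ^ 2 + φ * h * b) / t),
        -((1 - (1 - φ) * t ^ 2 / ((1 - φ) * t ^ 2 + φ * h * b)) / h)])⁻¹ =
      !![-(φ * (1 / (-((1 - φ) / b) - φ / t))),
         -t - φ * (1 / (-((1 - φ) / b) - φ / t));
         -t - φ * (1 / (-((1 - φ) / b) - φ / t)),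
         -t - φ * (1 / (-((1 - φ) / b) - φ / t)) - h] := by
  have ht' : t ≠ 0 := ht.ne'
  have hb' : b ≠ 0 := hb.ne'
  have hh' : h ≠ 0 := hh.ne'
  have hΔ : (0:ℝ) < (1 - φ) * t ^ 2 + φ * h * b := by
    rcases eq_or_lt_of_le h1 with h1' | h1'
    · subst h1'; simpa using mul_pos hh hb
    · nlinarith [mul_pos (sub_pos.2 h1') (mul_pos ht ht),
        mul_nonneg h0 (mul_pos hh hb).le]
  have hEpos : (0:ℝ) < (1 - φ) * t + φ * b := by
    rcases eq_or_lt_of_le h1 with h1' | h1'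
    · subst h1'; simpa using hb
    · nlinarith [mul_nonneg h0 hb.le, mul_pos (sub_pos.2 h1') ht]
  have hD : -((1 - φ) / b) - φ / t ≠ 0 := by
    have : (0:ℝ) < (1 - φ) / b + φ / t := by
      rcases eq_or_lt_of_le h1 with h1' | h1'
      · subst h1'; simp; positivity
      · have := div_pos (sub_pos.2 h1') hb
        have := div_nonneg h0 ht.le
        linarith
    intro hc; linarith
  set d := (1 - φ) * t ^ 2 + φ * h * b with hd
  set e := (1 - φ) * t + φ * b with he
  clear_value d e
  have hd0 : d ≠ 0 := hΔ.ne'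
  have he0 : e ≠ 0 := hEpos.ne'
  have h3 : -((1 - φ) / b) - φ / t = -e / (b * t) := by
    rw [he]; field_simp; ring
  have hL : φ * (1 / (-((1 - φ) / b) - φ / t)) = -(φ * t * b) / e := by
    rw [h3, one_div_div, div_neg]
    ring
  apply inv_eq_right_inv
  rw [hL]
  ext i j
  fin_cases i <;> fin_cases j <;>
    simp [Matrix.mul_apply, Fin.sum_univ_two, Matrix.one_apply] <;>
    field_simp <;> rw [hd, he] <;> ring

theorem quad_pos {n : ℕ} (M : Matrix (Fin n) (Fin n) ℝ) (hM : M.PosDef)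
    (s : Matrix (Fin n) (Fin 1) ℝ) (hs : s ≠ 0) :
    0 < (sᵀ * M * s) 0 0 := by
  have hx : (fun i => s i 0) ≠ 0 := by
    intro hc
    apply hs
    ext i j
    have := congrFun hc i
    simpa [Fin.fin_one_eq_zero j] using this
  have h2 := hM.dotProduct_mulVec_pos hx
  have h3 : 0 < ∑ x : Fin n, ∑ x1 : Fin n, M x x1 * (s x 0 * s x1 0) := by
    simpa [Matrix.mul_apply, Matrix.mulVec, dotProduct, Finset.sum_mul,
      Finset.mul_sum, mul_comm, mul_assoc, mul_left_comm] using h2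
  have e1 : ∑ x : Fin n, ∑ x1 : Fin n, M x1 x * (s x 0 * s x1 0)
      = ∑ x : Fin n, ∑ x1 : Fin n, M x x1 * (s x 0 * s x1 0) := by
    rw [Finset.sum_comm]
    exact Finset.sum_congr rfl fun i _ => Finset.sum_congr rfl fun j _ => by ring
  simpa [Matrix.mul_apply, Matrix.mulVec, dotProduct, Finset.sum_mul,
    Finset.mul_sum, mul_comm, mul_assoc, mul_left_comm] using lt_of_lt_of_eq h3 e1.symm

theorem lemma1_inverse (n : ℕ)
    (B0 H0 : Matrix (Fin n) (Fin n) ℝ)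
    (hB0 : B0.PosDef) (hH0 : H0.PosDef) (hinv : H0 = B0⁻¹)
    (s y : Matrix (Fin n) (Fin 1) ℝ)
    (φ : ℝ) (hφ : φ ∈ Set.Icc (0 : ℝ) 1)
    (hsy : (sᵀ * y) 0 0 > 0) :
    let sty := (sᵀ * y) 0 0
    let sBs := (sᵀ * B0 * s) 0 0
    let yHy := (yᵀ * H0 * y) 0 0
    let Δ0 := (1 - φ) * sty ^ 2 + φ * yHy * sBs
    let Φ0 := (1 - φ) * sty ^ 2 / Δ0
    let α := 1 / sty + Φ0 * yHy / sty ^ 2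
    let β := -(Φ0 / sty)
    let δ := -((1 - Φ0) / yHy)
    let lam0 := 1 / (-((1 - φ) / sBs) - φ / sty)
    α * δ - β ^ 2 ≠ 0 →
      (!![α, β; β, δ])⁻¹ =
        !![-(φ * lam0), -sty - φ * lam0;
           -sty - φ * lam0, -sty - φ * lam0 - yHy] := by
  intro sty sBs yHy Δ0 Φ0 α β δ lam0 _
  have hs : s ≠ 0 := by
    intro hc
    rw [hc] at hsy
    simp [Matrix.mul_apply] at hsy
  have hy : y ≠ 0 := by
    intro hc
    rw [hc] at hsy
    simp at hsy
  have hsBs : 0 < sBs := quad_pos B0 hB0 s hs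
  have hyHy : 0 < yHy := quad_pos H0 hH0 y hy
  exact lemma1_aux sty sBs yHy φ hsy hsBs hyHy hφ.1 hφ.2
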